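/- The noncommutative algebra 𝒥 = k⟨x₁,x₂⟩/(f₁, f₂), where f₁ = x₁x₂² − 2x₂x₁x₂ + x₂²x₁ and f₂ = x₁³x₂ − 3x₁²x₂x₁ + 3x₁x₂x₁² − x₂x₁³ + (1−u)x₁x₂x₁x₂ + u x₂x₁²x₂ + (u−3)x₂x₁x₂x₁ + (2−u)x₂²x₁² − v x₂²x₁x₂ + v x₂³x₁ + w x₂⁴ (u,v,w ∈ k), is isomorphic as a graded algebra to the Ore extension B[x₁; id, δ], where B = k[x₂, z₁, z₂] is the commutative polynomial algebra with deg x₂ = 1, deg z₁ = 2, deg z₂ = 3, and δ is the k-derivation of B determined by δ(x₂) = z₁, δ(z₁) = z₂, δ(z₂) = (u−1)z₁² − x₂z₂ + v x₂²z₁ − w x₂⁴. -/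

import Mathlib

/-- Key noncommutative polynomial identity relating f₂ to the commutator
`[A, Z₂]`, the derivation value, and a multiple of f₁. -/
lemma key_identity {k R : Type*} [Field k] [Ring R] [Algebra k R] (u v w : k) (A B : R) :
    A ^ 3 * B - 3 * (A ^ 2 * B * A) + 3 * (A * B * A ^ 2) - B * A ^ 3
      + (1 - u) • (A * B * A * B) + u • (B * A ^ 2 * B) + (u - 3) • (B * A * B * A)
      + (2 - u) • (B ^ 2 * A ^ 2) - v • (B ^ 2 * A * B) + v • (B ^ 3 * A) + w • (B ^ 4)
    = (A * (A * (A * B - B * A) - (A * B - B * A) * A)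
        - (A * (A * B - B * A) - (A * B - B * A) * A) * A)
      - ((u - 1) • ((A * B - B * A) * (A * B - B * A))
          - B * (A * (A * B - B * A) - (A * B - B * A) * A)
          + v • (B * B * (A * B - B * A)) - w • (B ^ 4))
      - (u - 1) • ((A * B ^ 2 - 2 * (B * A * B) + B ^ 2 * A) * A) := by
  simp only [mul_sub, sub_mul, mul_add, add_mul, smul_sub, smul_add, mul_smul_comm,
    smul_mul_assoc, mul_assoc, pow_succ, pow_zero, one_mul, mul_one]
  rw [show ((3:R)) = ((3:k) • (1:R)) by simp [Algebra.smul_def, map_ofNat],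
    show ((2:R)) = ((2:k) • (1:R)) by simp [Algebra.smul_def, map_ofNat]]
  simp only [smul_mul_assoc, one_mul, smul_sub, smul_add, smul_smul]
  module

/-- Evaluation of a multivariate polynomial in a possibly noncommutative algebra,
at a family of pairwise commuting elements. -/
noncomputable def ncAeval {k Q : Type*} [Field k] [Ring Q] [Algebra k Q] (g : Fin 3 → Q)
    (hg : ∀ i j, g i * g j = g j * g i) : MvPolynomial (Fin 3) k →ₐ[k] Q :=
  letI : CommRing (Algebra.adjoin k (Set.range g)) :=
    Algebra.adjoinCommRingOfComm k (by rintro x ⟨i, rfl⟩ y ⟨j, rfl⟩; exact hg i j)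
  ((Algebra.adjoin k (Set.range g)).val.comp
    (MvPolynomial.aeval fun i =>
      (⟨g i, Algebra.subset_adjoin (Set.mem_range_self i)⟩ : Algebra.adjoin k (Set.range g))))

lemma ncAeval_X {k Q : Type*} [Field k] [Ring Q] [Algebra k Q] (g : Fin 3 → Q)
    (hg : ∀ i j, g i * g j = g j * g i) (i : Fin 3) :
    ncAeval (k := k) g hg (MvPolynomial.X i) = g i := by
  letI : CommRing (Algebra.adjoin k (Set.range g)) :=
    Algebra.adjoinCommRingOfComm k (by rintro x ⟨i, rfl⟩ y ⟨j, rfl⟩; exact hg i j)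
  show ((Algebra.adjoin k (Set.range g)).val.comp
    (MvPolynomial.aeval fun i =>
      (⟨g i, Algebra.subset_adjoin (Set.mem_range_self i)⟩ :
        Algebra.adjoin k (Set.range g)))) (MvPolynomial.X i) = g i
  rw [AlgHom.comp_apply, MvPolynomial.aeval_X]
  rfl

/-- The defining relations of the Jordan-type algebra 𝒥 = k⟨x₁,x₂⟩/(f₁,f₂). -/
inductive JordanRel (k : Type*) [Field k] (u v w : k) :
    FreeAlgebra k (Fin 2) → FreeAlgebra k (Fin 2) → Prop
  | rel1 : JordanRel k u v w
      (FreeAlgebra.ι k 0 * FreeAlgebra.ι k 1 ^ 2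
        - 2 * (FreeAlgebra.ι k 1 * FreeAlgebra.ι k 0 * FreeAlgebra.ι k 1)
        + FreeAlgebra.ι k 1 ^ 2 * FreeAlgebra.ι k 0) 0
  | rel2 : JordanRel k u v w
      (FreeAlgebra.ι k 0 ^ 3 * FreeAlgebra.ι k 1
        - 3 * (FreeAlgebra.ι k 0 ^ 2 * FreeAlgebra.ι k 1 * FreeAlgebra.ι k 0)
        + 3 * (FreeAlgebra.ι k 0 * FreeAlgebra.ι k 1 * FreeAlgebra.ι k 0 ^ 2)
        - FreeAlgebra.ι k 1 * FreeAlgebra.ι k 0 ^ 3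
        + (1 - u) • (FreeAlgebra.ι k 0 * FreeAlgebra.ι k 1 * FreeAlgebra.ι k 0 * FreeAlgebra.ι k 1)
        + u • (FreeAlgebra.ι k 1 * FreeAlgebra.ι k 0 ^ 2 * FreeAlgebra.ι k 1)
        + (u - 3) • (FreeAlgebra.ι k 1 * FreeAlgebra.ι k 0 * FreeAlgebra.ι k 1 * FreeAlgebra.ι k 0)
        + (2 - u) • (FreeAlgebra.ι k 1 ^ 2 * FreeAlgebra.ι k 0 ^ 2)
        - v • (FreeAlgebra.ι k 1 ^ 2 * FreeAlgebra.ι k 0 * FreeAlgebra.ι k 1)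
        + v • (FreeAlgebra.ι k 1 ^ 3 * FreeAlgebra.ι k 0)
        + w • (FreeAlgebra.ι k 1 ^ 4)) 0

set_option maxHeartbeats 1000000 in
/-- 𝒥 = k⟨x₁,x₂⟩/(f₁,f₂) is isomorphic to the Ore extension
B[x₁; id, δ], where B = k[x₂,z₁,z₂] is a polynomial algebra and δ is the
derivation with δ(x₂) = z₁, δ(z₁) = z₂,
δ(z₂) = (u−1)z₁² − x₂z₂ + v x₂² z₁ − w x₂⁴. The Ore extension is characterized
by: C contains B via ι, an element Y with Y·b = b·Y + δ(b), and C is a free left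
B-module with basis the powers of Y. -/
theorem jordan_algebra_is_ore_extension (k : Type*) [Field k] [CharZero k]
    (u v w : k)
    (δ : Derivation k (MvPolynomial (Fin 3) k) (MvPolynomial (Fin 3) k))
    (hδ0 : δ (MvPolynomial.X 0) = MvPolynomial.X 1)
    (hδ1 : δ (MvPolynomial.X 1) = MvPolynomial.X 2)
    (hδ2 : δ (MvPolynomial.X 2) =
      (MvPolynomial.C (u - 1)) * (MvPolynomial.X 1) ^ 2
        - (MvPolynomial.X 0) * (MvPolynomial.X 2)
        + (MvPolynomial.C v) * (MvPolynomial.X 0) ^ 2 * (MvPolynomial.X 1)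
        - (MvPolynomial.C w) * (MvPolynomial.X 0) ^ 4)
    -- C together with ιB and Y is the Ore extension B[x₁; id, δ]
    (C : Type*) [Ring C] [Algebra k C]
    (ιB : MvPolynomial (Fin 3) k →ₐ[k] C) (Y : C)
    (hcomm : ∀ b : MvPolynomial (Fin 3) k, Y * ιB b = ιB b * Y + ιB (δ b))
    (hfree : ∀ c : C, ∃! f : ℕ →₀ MvPolynomial (Fin 3) k,
      c = f.sum fun n b => ιB b * Y ^ n) :
    ∃ e : RingQuot (JordanRel k u v w) ≃ₐ[k] C,
      e (RingQuot.mkAlgHom k (JordanRel k u v w) (FreeAlgebra.ι k 0)) = Y ∧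
      e (RingQuot.mkAlgHom k (JordanRel k u v w) (FreeAlgebra.ι k 1)) =
        ιB (MvPolynomial.X 0) := by
  classical
  set A := RingQuot.mkAlgHom k (JordanRel k u v w) (FreeAlgebra.ι k 0) with hA
  set B := RingQuot.mkAlgHom k (JordanRel k u v w) (FreeAlgebra.ι k 1) with hB
  have hf1 : A * B ^ 2 - 2 * (B * A * B) + B ^ 2 * A = 0 := by
    have h := RingQuot.mkAlgHom_rel k (JordanRel.rel1 (k := k) (u := u) (v := v) (w := w))
    simpa only [map_add, map_sub, map_mul, map_pow, map_ofNat, map_zero, ← hA, ← hB] using h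
  have hf2 : A ^ 3 * B - 3 * (A ^ 2 * B * A) + 3 * (A * B * A ^ 2) - B * A ^ 3
      + (1 - u) • (A * B * A * B) + u • (B * A ^ 2 * B) + (u - 3) • (B * A * B * A)
      + (2 - u) • (B ^ 2 * A ^ 2) - v • (B ^ 2 * A * B) + v • (B ^ 3 * A)
      + w • (B ^ 4) = 0 := by
    have h := RingQuot.mkAlgHom_rel k (JordanRel.rel2 (k := k) (u := u) (v := v) (w := w))
    simpa only [map_add, map_sub, map_mul, map_pow, map_smul, map_ofNat, map_zero,
      ← hA, ← hB] using h
  obtain ⟨Z1, hZ1⟩ : ∃ z, z = A * B - B * A := ⟨_, rfl⟩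
  obtain ⟨Z2, hZ2⟩ : ∃ z, z = A * Z1 - Z1 * A := ⟨_, rfl⟩
  have hAZ2 : A * Z2 - Z2 * A
      = (u - 1) • (Z1 * Z1) - B * Z2 + v • (B * B * Z1) - w • B ^ 4 := by
    have h := key_identity u v w A B
    rw [← hZ1] at h
    rw [← hZ2] at h
    rw [hf2, hf1, zero_mul, smul_zero, sub_zero] at h
    exact sub_eq_zero.mp h.symm
  have hBZ1 : B * Z1 = Z1 * B := by
    have h : B * Z1 - Z1 * B = -(A * B ^ 2 - 2 * (B * A * B) + B ^ 2 * A) := by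
      rw [hZ1]; simp only [pow_two, mul_sub, sub_mul, mul_assoc, two_mul]; abel
    rw [hf1, neg_zero] at h
    exact sub_eq_zero.mp h
  have hBZ2 : B * Z2 = Z2 * B := by
    have key2 : ∀ a b z : RingQuot (JordanRel k u v w),
        b * (a * z - z * a) - (a * z - z * a) * b
          = ((b * a - a * b) * z - z * (b * a - a * b))
            + (a * (b * z - z * b) - (b * z - z * b) * a) := by
      intros; simp only [mul_sub, sub_mul, mul_assoc]; abel
    have h := key2 A B Z1
    rw [hBZ1, sub_self, mul_zero, zero_mul, sub_zero, add_zero] at h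
    rw [← hZ2] at h
    have h5 : (B * A - A * B) * Z1 - Z1 * (B * A - A * B)
        = Z1 * (A * B - B * A) - (A * B - B * A) * Z1 := by
      simp only [sub_mul, mul_sub, mul_assoc]; abel
    rw [h5, ← hZ1, sub_self] at h
    exact sub_eq_zero.mp h
  have hZ1Z2 : Z1 * Z2 = Z2 * Z1 := by
    have key3 : ∀ a b z : RingQuot (JordanRel k u v w),
        (a * b - b * a) * z - z * (a * b - b * a)
          = (a * (b * z - z * b) - (b * z - z * b) * a)
            + ((a * z - z * a) * b - b * (a * z - z * a)) := by
      intros; simp only [mul_sub, sub_mul, mul_assoc]; abel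
    have h := key3 A B Z2
    rw [hBZ2, sub_self, mul_zero, zero_mul, sub_zero, zero_add, ← hZ1, hAZ2] at h
    have c1 : Commute B Z1 := hBZ1
    have c2 : Commute B Z2 := hBZ2
    have e1 : Commute B ((u - 1) • (Z1 * Z1)) := ((c1.mul_right c1).smul_right _)
    have e2 : Commute B (B * Z2) := (Commute.refl B).mul_right c2
    have e3 : Commute B (v • (B * B * Z1)) :=
      (((Commute.refl B).mul_right (Commute.refl B)).mul_right c1).smul_right _
    have e4 : Commute B (w • B ^ 4) := ((Commute.refl B).pow_right 4).smul_right _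
    have cE : Commute B ((u - 1) • (Z1 * Z1) - B * Z2 + v • (B * B * Z1) - w • B ^ 4) :=
      ((e1.sub_right e2).add_right e3).sub_right e4
    rw [← cE.eq, sub_self] at h
    exact sub_eq_zero.mp h
  set g : Fin 3 → RingQuot (JordanRel k u v w) := ![B, Z1, Z2] with hgdef
  have hg : ∀ i j, g i * g j = g j * g i := by
    intro i j
    fin_cases i <;> fin_cases j <;> simp [hgdef, hBZ1, hBZ2, hZ1Z2]
  set mkB := ncAeval (k := k) g hg with hmkBdef
  have hmk0 : mkB (MvPolynomial.X 0) = B := by rw [hmkBdef, ncAeval_X]; simp [hgdef]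
  have hmk1 : mkB (MvPolynomial.X 1) = Z1 := by rw [hmkBdef, ncAeval_X]; simp [hgdef]
  have hmk2 : mkB (MvPolynomial.X 2) = Z2 := by rw [hmkBdef, ncAeval_X]; simp [hgdef]
  have hAX : ∀ i : Fin 3, A * mkB (MvPolynomial.X i)
      = mkB (MvPolynomial.X i) * A + mkB (δ (MvPolynomial.X i)) := by
    intro i
    fin_cases i
    · show A * mkB (MvPolynomial.X 0) = mkB (MvPolynomial.X 0) * A + mkB (δ (MvPolynomial.X 0))
      rw [hδ0, hmk0, hmk1, hZ1]; noncomm_ring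
    · show A * mkB (MvPolynomial.X 1) = mkB (MvPolynomial.X 1) * A + mkB (δ (MvPolynomial.X 1))
      rw [hδ1, hmk1, hmk2, hZ2]; noncomm_ring
    · show A * mkB (MvPolynomial.X 2) = mkB (MvPolynomial.X 2) * A + mkB (δ (MvPolynomial.X 2))
      rw [hδ2, hmk2]
      have hE : mkB ((MvPolynomial.C (u - 1)) * (MvPolynomial.X 1) ^ 2
          - (MvPolynomial.X 0) * (MvPolynomial.X 2)
          + (MvPolynomial.C v) * (MvPolynomial.X 0) ^ 2 * (MvPolynomial.X 1)
          - (MvPolynomial.C w) * (MvPolynomial.X 0) ^ 4)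
          = (u - 1) • (Z1 * Z1) - B * Z2 + v • (B * B * Z1) - w • B ^ 4 := by
        simp only [map_sub, map_add, map_mul, map_pow, hmk0, hmk1, hmk2,
          MvPolynomial.algHom_C, Algebra.smul_def]
        noncomm_ring
      rw [hE]
      have h := hAZ2
      rw [sub_eq_iff_eq_add] at h
      rw [h]
      exact add_comm _ _
  have hAmk : ∀ p : MvPolynomial (Fin 3) k, A * mkB p = mkB p * A + mkB (δ p) := by
    intro p
    induction p using MvPolynomial.induction_on with
    | C a =>
        have hδC : δ (MvPolynomial.C a) = 0 := by
          rw [show (MvPolynomial.C a : MvPolynomial (Fin 3) k) = algebraMap k _ a by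
            rw [MvPolynomial.algebraMap_eq]]
          exact Derivation.map_algebraMap δ a
        rw [hδC, map_zero, add_zero, MvPolynomial.algHom_C]
        exact (Algebra.commutes a A).symm
    | add p q hp hq =>
        rw [map_add, map_add, map_add, mul_add, hp, hq, add_mul]; abel
    | mul_X p i hp =>
        rw [Derivation.leibniz, map_mul]
        calc A * (mkB p * mkB (MvPolynomial.X i))
            = A * mkB p * mkB (MvPolynomial.X i) := by rw [mul_assoc]
          _ = (mkB p * A + mkB (δ p)) * mkB (MvPolynomial.X i) := by rw [hp]
          _ = mkB p * (A * mkB (MvPolynomial.X i))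
              + mkB (δ p) * mkB (MvPolynomial.X i) := by noncomm_ring
          _ = mkB p * (mkB (MvPolynomial.X i) * A + mkB (δ (MvPolynomial.X i)))
              + mkB (δ p) * mkB (MvPolynomial.X i) := by rw [hAX i]
          _ = mkB p * mkB (MvPolynomial.X i) * A
              + (mkB p * mkB (δ (MvPolynomial.X i))
                + mkB (MvPolynomial.X i) * mkB (δ p)) := by
              rw [show mkB (δ p) * mkB (MvPolynomial.X i)
                  = mkB (MvPolynomial.X i) * mkB (δ p) by
                rw [← map_mul, ← map_mul, mul_comm]]
              noncomm_ring
          _ = mkB p * mkB (MvPolynomial.X i) * A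
              + mkB (p • δ (MvPolynomial.X i) + MvPolynomial.X i • δ p) := by
              rw [map_add, smul_eq_mul, smul_eq_mul, map_mul, map_mul]
  have hzero : ∀ n : ℕ, mkB (0 : MvPolynomial (Fin 3) k) * A ^ n = 0 := by
    intro n; rw [map_zero, zero_mul]
  have hadd' : ∀ (n : ℕ) (b₁ b₂ : MvPolynomial (Fin 3) k),
      mkB (b₁ + b₂) * A ^ n = mkB b₁ * A ^ n + mkB b₂ * A ^ n := by
    intros; rw [map_add, add_mul]
  have hPadd : ∀ q1 q2 : RingQuot (JordanRel k u v w),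
      (∃ f : ℕ →₀ MvPolynomial (Fin 3) k, q1 = f.sum fun n b => mkB b * A ^ n) →
      (∃ f : ℕ →₀ MvPolynomial (Fin 3) k, q2 = f.sum fun n b => mkB b * A ^ n) →
      (∃ f : ℕ →₀ MvPolynomial (Fin 3) k, q1 + q2 = f.sum fun n b => mkB b * A ^ n) := by
    rintro _ _ ⟨f, rfl⟩ ⟨f2, rfl⟩
    exact ⟨f + f2, (Finsupp.sum_add_index' hzero hadd').symm⟩
  have hPmul : ∀ (p : MvPolynomial (Fin 3) k) (q : RingQuot (JordanRel k u v w)),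
      (∃ f : ℕ →₀ MvPolynomial (Fin 3) k, q = f.sum fun n b => mkB b * A ^ n) →
      (∃ f : ℕ →₀ MvPolynomial (Fin 3) k, mkB p * q = f.sum fun n b => mkB b * A ^ n) := by
    rintro p _ ⟨f, rfl⟩
    refine ⟨f.mapRange (p * ·) (mul_zero p), ?_⟩
    rw [Finsupp.mul_sum, Finsupp.sum_mapRange_index hzero]
    exact Finsupp.sum_congr fun n b => by rw [map_mul, mul_assoc]
  have hPA : ∀ q : RingQuot (JordanRel k u v w),
      (∃ f : ℕ →₀ MvPolynomial (Fin 3) k, q = f.sum fun n b => mkB b * A ^ n) →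
      (∃ f : ℕ →₀ MvPolynomial (Fin 3) k, A * q = f.sum fun n b => mkB b * A ^ n) := by
    rintro _ ⟨f, rfl⟩
    induction f using Finsupp.induction with
    | zero => exact ⟨0, by rw [Finsupp.sum_zero_index, mul_zero]⟩
    | single_add n b f hnf hb ih =>
        rw [Finsupp.sum_add_index' hzero hadd', Finsupp.sum_single_index (hzero n), mul_add]
        refine hPadd _ _ ?_ ih
        have hstep : A * (mkB b * A ^ n) = mkB b * A ^ (n + 1) + mkB (δ b) * A ^ n := by
          rw [← mul_assoc, hAmk b, add_mul, mul_assoc, ← pow_succ']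
        exact ⟨Finsupp.single (n + 1) b + Finsupp.single n (δ b), by
          rw [Finsupp.sum_add_index' hzero hadd', Finsupp.sum_single_index (hzero _),
            Finsupp.sum_single_index (hzero _), hstep]⟩
  have hPone : ∃ f : ℕ →₀ MvPolynomial (Fin 3) k,
      (1 : RingQuot (JordanRel k u v w)) = f.sum fun n b => mkB b * A ^ n :=
    ⟨Finsupp.single 0 1, by rw [Finsupp.sum_single_index (hzero 0), map_one, pow_zero, mul_one]⟩
  have hspan : ∀ q : RingQuot (JordanRel k u v w),
      ∃ f : ℕ →₀ MvPolynomial (Fin 3) k, q = f.sum fun n b => mkB b * A ^ n := by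
    intro q
    obtain ⟨x, rfl⟩ := RingQuot.mkAlgHom_surjective k (JordanRel k u v w) q
    have hmul : ∀ x : FreeAlgebra k (Fin 2), ∀ q : RingQuot (JordanRel k u v w),
        (∃ f : ℕ →₀ MvPolynomial (Fin 3) k, q = f.sum fun n b => mkB b * A ^ n) →
        (∃ f : ℕ →₀ MvPolynomial (Fin 3) k,
          RingQuot.mkAlgHom k (JordanRel k u v w) x * q
            = f.sum fun n b => mkB b * A ^ n) := by
      intro x
      induction x using FreeAlgebra.induction with
      | grade0 r =>
          intro q hq
          have hr : RingQuot.mkAlgHom k (JordanRel k u v w) (algebraMap k _ r)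
              = mkB (MvPolynomial.C r) := by
            rw [AlgHom.commutes, MvPolynomial.algHom_C]
          rw [hr]; exact hPmul _ _ hq
      | grade1 i =>
          intro q hq
          fin_cases i
          · show ∃ f : ℕ →₀ MvPolynomial (Fin 3) k,
              RingQuot.mkAlgHom k (JordanRel k u v w) (FreeAlgebra.ι k 0) * q
                = f.sum fun n b => mkB b * A ^ n
            rw [← hA]; exact hPA _ hq
          · show ∃ f : ℕ →₀ MvPolynomial (Fin 3) k,
              RingQuot.mkAlgHom k (JordanRel k u v w) (FreeAlgebra.ι k 1) * q
                = f.sum fun n b => mkB b * A ^ n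
            rw [← hB, ← hmk0]; exact hPmul _ _ hq
      | mul x y hx hy => intro q hq; rw [map_mul, mul_assoc]; exact hx _ (hy _ hq)
      | add x y hx hy =>
          intro q hq; rw [map_add, add_mul]; exact hPadd _ _ (hx _ hq) (hy _ hq)
    have h := hmul x 1 hPone
    rwa [mul_one] at h
  -- the forward map
  set φ0 : FreeAlgebra k (Fin 2) →ₐ[k] C :=
    FreeAlgebra.lift k ![Y, ιB (MvPolynomial.X 0)] with hφ0
  have hφι0 : φ0 (FreeAlgebra.ι k 0) = Y := by
    rw [hφ0, FreeAlgebra.lift_ι_apply]; simp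
  have hφι1 : φ0 (FreeAlgebra.ι k 1) = ιB (MvPolynomial.X 0) := by
    rw [hφ0, FreeAlgebra.lift_ι_apply]; simp
  have hYb0 : Y * ιB (MvPolynomial.X 0) - ιB (MvPolynomial.X 0) * Y
      = ιB (MvPolynomial.X 1) := by
    rw [hcomm (MvPolynomial.X 0), hδ0]; abel
  have hYb1 : Y * ιB (MvPolynomial.X 1) - ιB (MvPolynomial.X 1) * Y
      = ιB (MvPolynomial.X 2) := by
    rw [hcomm (MvPolynomial.X 1), hδ1]; abel
  have hYb2 : Y * ιB (MvPolynomial.X 2) - ιB (MvPolynomial.X 2) * Y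
      = ιB (δ (MvPolynomial.X 2)) := by
    rw [hcomm (MvPolynomial.X 2)]; abel
  have hf1C : Y * ιB (MvPolynomial.X 0) ^ 2
      - 2 * (ιB (MvPolynomial.X 0) * Y * ιB (MvPolynomial.X 0))
      + ιB (MvPolynomial.X 0) ^ 2 * Y = 0 := by
    have h : Y * ιB (MvPolynomial.X 0) ^ 2
        - 2 * (ιB (MvPolynomial.X 0) * Y * ιB (MvPolynomial.X 0))
        + ιB (MvPolynomial.X 0) ^ 2 * Y
        = (Y * ιB (MvPolynomial.X 0) - ιB (MvPolynomial.X 0) * Y) * ιB (MvPolynomial.X 0)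
          - ιB (MvPolynomial.X 0) * (Y * ιB (MvPolynomial.X 0)
            - ιB (MvPolynomial.X 0) * Y) := by
      simp only [pow_two, mul_sub, sub_mul, mul_assoc, two_mul]; abel
    rw [h, hYb0, ← map_mul, ← map_mul, mul_comm, sub_self]
  have hEC : ιB (δ (MvPolynomial.X 2))
      = (u - 1) • (ιB (MvPolynomial.X 1) * ιB (MvPolynomial.X 1))
        - ιB (MvPolynomial.X 0) * ιB (MvPolynomial.X 2)
        + v • (ιB (MvPolynomial.X 0) * ιB (MvPolynomial.X 0) * ιB (MvPolynomial.X 1))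
        - w • ιB (MvPolynomial.X 0) ^ 4 := by
    rw [hδ2]
    simp only [map_sub, map_add, map_mul, map_pow, MvPolynomial.algHom_C, Algebra.smul_def]
    noncomm_ring
  have hf2C : Y ^ 3 * ιB (MvPolynomial.X 0)
      - 3 * (Y ^ 2 * ιB (MvPolynomial.X 0) * Y)
      + 3 * (Y * ιB (MvPolynomial.X 0) * Y ^ 2)
      - ιB (MvPolynomial.X 0) * Y ^ 3
      + (1 - u) • (Y * ιB (MvPolynomial.X 0) * Y * ιB (MvPolynomial.X 0))
      + u • (ιB (MvPolynomial.X 0) * Y ^ 2 * ιB (MvPolynomial.X 0))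
      + (u - 3) • (ιB (MvPolynomial.X 0) * Y * ιB (MvPolynomial.X 0) * Y)
      + (2 - u) • (ιB (MvPolynomial.X 0) ^ 2 * Y ^ 2)
      - v • (ιB (MvPolynomial.X 0) ^ 2 * Y * ιB (MvPolynomial.X 0))
      + v • (ιB (MvPolynomial.X 0) ^ 3 * Y)
      + w • ιB (MvPolynomial.X 0) ^ 4 = 0 := by
    have h := key_identity u v w Y (ιB (MvPolynomial.X 0))
    rw [hYb0] at h
    rw [hYb1] at h
    rw [hf1C, zero_mul, smul_zero, sub_zero, hYb2, hEC, sub_self] at h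
    exact h
  have hrel : ∀ ⦃x y : FreeAlgebra k (Fin 2)⦄, JordanRel k u v w x y → φ0 x = φ0 y := by
    intro x y h
    cases h with
    | rel1 =>
        simp only [map_add, map_sub, map_mul, map_pow, map_ofNat, map_zero, hφι0, hφι1]
        exact hf1C
    | rel2 =>
        simp only [map_add, map_sub, map_mul, map_pow, map_smul, map_ofNat, map_zero,
          hφι0, hφι1]
        exact hf2C
  set φbar := (RingQuot.liftAlgHom k (s := JordanRel k u v w)) ⟨φ0, hrel⟩ with hφbar
  have hφA : φbar A = Y := by
    rw [hφbar, hA, RingQuot.liftAlgHom_mkAlgHom_apply]; exact hφι0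
  have hφB : φbar B = ιB (MvPolynomial.X 0) := by
    rw [hφbar, hB, RingQuot.liftAlgHom_mkAlgHom_apply]; exact hφι1
  have hφZ1 : φbar Z1 = ιB (MvPolynomial.X 1) := by
    rw [hZ1, map_sub, map_mul, map_mul, hφA, hφB]; exact hYb0
  have hφZ2 : φbar Z2 = ιB (MvPolynomial.X 2) := by
    rw [hZ2, map_sub, map_mul, map_mul, hφA, hφZ1]; exact hYb1
  have hcompose : ∀ p : MvPolynomial (Fin 3) k, φbar (mkB p) = ιB p := by
    have h : φbar.comp mkB = ιB := by
      apply MvPolynomial.algHom_ext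
      intro i
      fin_cases i
      · show (φbar.comp mkB) (MvPolynomial.X 0) = ιB (MvPolynomial.X 0)
        rw [AlgHom.comp_apply, hmk0]; exact hφB
      · show (φbar.comp mkB) (MvPolynomial.X 1) = ιB (MvPolynomial.X 1)
        rw [AlgHom.comp_apply, hmk1]; exact hφZ1
      · show (φbar.comp mkB) (MvPolynomial.X 2) = ιB (MvPolynomial.X 2)
        rw [AlgHom.comp_apply, hmk2]; exact hφZ2
    intro p
    rw [← h, AlgHom.comp_apply]
  have hsum : ∀ f : ℕ →₀ MvPolynomial (Fin 3) k,
      φbar (f.sum fun n b => mkB b * A ^ n) = f.sum fun n b => ιB b * Y ^ n := by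
    intro f
    rw [map_finsuppSum]
    exact Finsupp.sum_congr fun n b => by rw [map_mul, map_pow, hcompose, hφA]
  have hinj : Function.Injective φbar := by
    rw [injective_iff_map_eq_zero]
    intro q hq
    obtain ⟨f, rfl⟩ := hspan q
    rw [hsum] at hq
    have hf0 : f = 0 := (hfree 0).unique hq.symm (by rw [Finsupp.sum_zero_index])
    rw [hf0, Finsupp.sum_zero_index]
  have hsurj : Function.Surjective φbar := by
    intro c
    obtain ⟨f, hf, -⟩ := hfree c
    exact ⟨f.sum fun n b => mkB b * A ^ n, by rw [hsum]; exact hf.symm⟩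
  refine ⟨AlgEquiv.ofBijective φbar ⟨hinj, hsurj⟩, ?_, ?_⟩
  · show φbar A = Y
    exact hφA
  · show φbar B = ιB (MvPolynomial.X 0)
    exact hφB
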